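/- Let d ≥ 1, σ ∈ (−d,0) and let E ⊆ ℝ^d be measurable with finite Lebesgue measure. Then for every x ∈ ℝ^d, lim_{r→0⁺} j^σ_r(x,E) = −∫_E |x−y|^{−(d+σ)} dy − dω_d/σ, and lim_{r→0⁺} Ĵ^σ_r(E) = Ĵ^σ(E), where J^σ(E) := −∫_E ∫_E |x−y|^{−(d+σ)} dy dx and Ĵ^σ(E) := J^σ(E) − (dω_d/σ)|E| ∈ ℝ. -/

import Mathlib

open MeasureTheory Metric Filter Topology ENNReal
open scoped symmDiff

noncomputable section

abbrev Rd (d : ℕ) := EuclideanSpace ℝ (Fin d)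

/-- Lebesgue measure of the unit ball in `ℝ^d`. -/
def omegaD (d : ℕ) : ℝ := (volume (ball (0 : Rd d) 1)).toReal

/-- The kernel `|x-y|^{-(d+σ)}`. -/
def kerH (d : ℕ) (σ : ℝ) (x y : Rd d) : ℝ := ‖x - y‖ ^ (-((d : ℝ) + σ))

/-- `J^σ_r(E) = -∫_E ∫_{E∖B_r(x)} |x-y|^{-(d+σ)} dy dx`. -/
def Jfun (d : ℕ) (σ r : ℝ) (E : Set (Rd d)) : ℝ :=
  -∫ x in E, ∫ y in E \ ball x r, kerH d σ x y

/-- The renormalization constant `γ^σ_ρ`. -/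
def gam (d : ℕ) (σ ρ : ℝ) : ℝ :=
  if σ = 0 then d * omegaD d * Real.log ρ else d * omegaD d * (1 - ρ ^ (-σ)) / σ

/-- `Ĵ^σ_r(E) = J^σ_r(E) - γ^σ_r |E|`. -/
def Jhat (d : ℕ) (σ r : ℝ) (E : Set (Rd d)) : ℝ :=
  Jfun d σ r E - gam d σ r * (volume E).toReal

/-- `j^σ_r(x,E) = -∫_{E∖B_r(x)} |x-y|^{-(d+σ)} dy - γ^σ_r`. -/
def jfun (d : ℕ) (σ r : ℝ) (x : Rd d) (E : Set (Rd d)) : ℝ :=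
  -(∫ y in E \ ball x r, kerH d σ x y) - gam d σ r

/-- `J^σ(E) = -∫_E ∫_E |x-y|^{-(d+σ)} dy dx`. -/
def JfunFull (d : ℕ) (σ : ℝ) (E : Set (Rd d)) : ℝ :=
  -∫ x in E, ∫ y in E, kerH d σ x y

/-- `γ^σ = d ω_d / σ`. -/
def gamFull (d : ℕ) (σ : ℝ) : ℝ := d * omegaD d / σ

section Aux

open Set

/-- Integrability of `‖z‖^p` on a ball, for `-d < p < 0`. -/
lemma integrableOn_rpow_ball (d : ℕ) (p : ℝ) (hp1 : -(d:ℝ) < p) (hp2 : p < 0) (R : ℝ) :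
    IntegrableOn (fun z : Rd d => ‖z‖ ^ p) (ball (0 : Rd d) R) := by
  have hmeas : Measurable (fun z : Rd d => ‖z‖ ^ p) := by fun_prop
  have hnn : ∀ z : Rd d, 0 ≤ ‖z‖ ^ p := fun z => Real.rpow_nonneg (norm_nonneg _) _
  refine ⟨hmeas.aestronglyMeasurable, ?_⟩
  rw [hasFiniteIntegral_iff_ofReal (Eventually.of_forall hnn)]
  set μ := volume.restrict (ball (0 : Rd d) R)
  rw [lintegral_eq_lintegral_meas_le μ (Eventually.of_forall hnn) hmeas.aemeasurable]
  have hdp : (d : ℝ) * p⁻¹ < -1 := by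
    rw [← div_eq_mul_inv, div_lt_iff_of_neg hp2]
    linarith
  have key : ∀ t ∈ Ioi (1:ℝ), μ {a : Rd d | t ≤ ‖a‖ ^ p}
      ≤ ENNReal.ofReal (t ^ ((d:ℝ) * p⁻¹)) * volume (ball (0 : Rd d) 1) := by
    intro t ht
    have ht0 : (0:ℝ) < t := lt_trans one_pos ht
    have hsub : {a : Rd d | t ≤ ‖a‖ ^ p} ⊆ closedBall 0 (t ^ p⁻¹) := by
      intro a ha
      rw [mem_closedBall_zero_iff]
      rcases eq_or_ne a 0 with rfl | h0
      · simp [Real.rpow_nonneg ht0.le]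
      · have hna : 0 < ‖a‖ := norm_pos_iff.2 h0
        exact (Real.le_rpow_inv_iff_of_neg hna ht0 hp2).2 ha
    calc μ {a : Rd d | t ≤ ‖a‖ ^ p} ≤ volume (closedBall (0 : Rd d) (t ^ p⁻¹)) :=
          le_trans ((Measure.restrict_le_self) _) (measure_mono hsub)
      _ = ENNReal.ofReal ((t ^ p⁻¹) ^ (Module.finrank ℝ (Rd d))) * volume (ball (0 : Rd d) 1) :=
          Measure.addHaar_closedBall _ _ (Real.rpow_nonneg ht0.le _)
      _ = ENNReal.ofReal (t ^ ((d:ℝ) * p⁻¹)) * volume (ball (0 : Rd d) 1) := by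
          rw [← Real.rpow_natCast (t ^ p⁻¹) _, ← Real.rpow_mul ht0.le, finrank_euclideanSpace_fin,
            mul_comm p⁻¹]
  calc ∫⁻ t in Ioi (0:ℝ), μ {a : Rd d | t ≤ ‖a‖ ^ p}
      ≤ ∫⁻ t in Ioc (0:ℝ) 1 ∪ Ioi 1, μ {a : Rd d | t ≤ ‖a‖ ^ p} :=
        lintegral_mono_set Ioi_subset_Ioc_union_Ioi
    _ ≤ (∫⁻ t in Ioc (0:ℝ) 1, μ {a : Rd d | t ≤ ‖a‖ ^ p})
        + ∫⁻ t in Ioi (1:ℝ), μ {a : Rd d | t ≤ ‖a‖ ^ p} := lintegral_union_le _ _ _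
    _ < ∞ := by
        refine ENNReal.add_lt_top.2 ⟨?_, ?_⟩
        · calc (∫⁻ t in Ioc (0:ℝ) 1, μ {a : Rd d | t ≤ ‖a‖ ^ p})
              ≤ ∫⁻ _ in Ioc (0:ℝ) 1, volume (ball (0 : Rd d) R) := by
                refine lintegral_mono fun t => ?_
                calc μ {a : Rd d | t ≤ ‖a‖ ^ p} ≤ μ univ := measure_mono (subset_univ _)
                  _ = volume (ball (0 : Rd d) R) := Measure.restrict_apply_univ _
            _ = volume (ball (0 : Rd d) R) * volume (Ioc (0:ℝ) 1) := by
                rw [lintegral_const, Measure.restrict_apply_univ]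
            _ < ∞ := by
                refine ENNReal.mul_lt_top measure_ball_lt_top ?_
                simp [Real.volume_Ioc]
        · calc (∫⁻ t in Ioi (1:ℝ), μ {a : Rd d | t ≤ ‖a‖ ^ p})
              ≤ ∫⁻ t in Ioi (1:ℝ),
                  ENNReal.ofReal (t ^ ((d:ℝ) * p⁻¹)) * volume (ball (0 : Rd d) 1) :=
                setLIntegral_mono' measurableSet_Ioi key
            _ = (∫⁻ t in Ioi (1:ℝ), ENNReal.ofReal (t ^ ((d:ℝ) * p⁻¹)))
                  * volume (ball (0 : Rd d) 1) :=
                lintegral_mul_const' _ _ measure_ball_lt_top.ne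
            _ < ∞ := ENNReal.mul_lt_top
                ((integrableOn_Ioi_rpow_of_lt hdp one_pos).setLIntegral_lt_top)
                measure_ball_lt_top

lemma sub_preimage_ball (d : ℕ) (x : Rd d) (r : ℝ) :
    (fun z : Rd d => x - z) ⁻¹' (ball x r) = ball (0 : Rd d) r := by
  ext z
  simp [mem_ball, dist_eq_norm, sub_sub_cancel_left]

lemma ker_shift (d : ℕ) (σ : ℝ) (x : Rd d) (s : Set (Rd d)) (hs : MeasurableSet s) :
    ∫ z in (fun z : Rd d => x - z) ⁻¹' s, ‖z‖ ^ (-((d : ℝ) + σ)) = ∫ y in s, kerH d σ x y := by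
  have h := (Measure.measurePreserving_sub_left volume x).setIntegral_preimage_emb
    ((Homeomorph.subLeft x).measurableEmbedding) (kerH d σ x) s
  rw [← h]
  refine setIntegral_congr_fun ?_ (fun z _ => ?_)
  · exact hs.preimage (Homeomorph.subLeft x).measurable
  · simp [kerH, sub_sub_cancel]

lemma ker_ball_eq (d : ℕ) (σ : ℝ) (x : Rd d) (r : ℝ) :
    ∫ y in ball x r, kerH d σ x y = ∫ z in ball (0 : Rd d) r, ‖z‖ ^ (-((d : ℝ) + σ)) := by
  rw [← ker_shift d σ x (ball x r) measurableSet_ball, sub_preimage_ball]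

lemma ker_int_ball (d : ℕ) (hd : 1 ≤ d) (σ : ℝ) (hσ1 : -(d : ℝ) < σ) (hσ2 : σ < 0)
    (x : Rd d) (R : ℝ) : IntegrableOn (kerH d σ x) (ball x R) := by
  have hd1 : (1:ℝ) ≤ d := by exact_mod_cast hd
  have hp1 : -(d : ℝ) < -((d : ℝ) + σ) := by linarith
  have hp2 : -((d : ℝ) + σ) < 0 := by linarith
  have hmp := (Measure.measurePreserving_sub_left volume x).restrict_preimage
    (measurableSet_ball (x := x) (ε := R))
  rw [IntegrableOn, ← hmp.integrable_comp_emb ((Homeomorph.subLeft x).measurableEmbedding)]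
  have heq : (kerH d σ x) ∘ (fun z : Rd d => x - z) = fun z : Rd d => ‖z‖ ^ (-((d : ℝ) + σ)) := by
    funext z; simp [kerH, Function.comp, sub_sub_cancel]
  rw [heq, sub_preimage_ball]
  exact integrableOn_rpow_ball d _ hp1 hp2 R

lemma phi_tendsto (d : ℕ) (hd : 1 ≤ d) (p : ℝ)
    (hint : IntegrableOn (fun z : Rd d => ‖z‖ ^ p) (ball (0 : Rd d) 1)) :
    Tendsto (fun r => ∫ z in ball (0 : Rd d) r, ‖z‖ ^ p) (𝓝[>] (0:ℝ)) (𝓝 0) := by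
  haveI : Nonempty (Fin d) := ⟨⟨0, hd⟩⟩
  haveI : Nontrivial (Rd d) := inferInstance
  set φ : ℝ → ℝ := fun r => ∫ z in ball (0 : Rd d) r, ‖z‖ ^ p with hφ
  have hnn : ∀ r, 0 ≤ φ r := fun r =>
    setIntegral_nonneg measurableSet_ball (fun z _ => Real.rpow_nonneg (norm_nonneg _) _)
  have hmono : ∀ r₁ r₂ : ℝ, r₁ ≤ r₂ → r₂ ≤ 1 → φ r₁ ≤ φ r₂ := by
    intro r₁ r₂ h h2
    refine setIntegral_mono_set (hint.mono_set (ball_subset_ball h2))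
      (Eventually.of_forall (fun z => Real.rpow_nonneg (norm_nonneg _) _))
      (HasSubset.Subset.eventuallyLE (ball_subset_ball h))
  have hseq : Tendsto (fun n : ℕ => φ (1 / (n + 1))) atTop (𝓝 0) := by
    have h0 : (∫ z in ⋂ n : ℕ, ball (0 : Rd d) (1 / (n + 1)), ‖z‖ ^ p) = 0 := by
      have hsub : (⋂ n : ℕ, ball (0 : Rd d) (1 / (n + 1))) ⊆ {0} := by
        intro z hz
        simp only [mem_iInter, mem_ball_zero_iff] at hz
        have hle : ‖z‖ ≤ 0 := by
          by_contra h
          push_neg at h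
          obtain ⟨n, hn⟩ := exists_nat_one_div_lt h
          exact absurd (hz n) (not_lt.2 hn.le)
        simp [mem_singleton_iff, norm_le_zero_iff.1 hle]
      have hz : volume (⋂ n : ℕ, ball (0 : Rd d) (1 / (n + 1))) = 0 :=
        measure_mono_null hsub (measure_singleton 0)
      have hres : volume.restrict (⋂ n : ℕ, ball (0 : Rd d) (1 / (n + 1))) = 0 :=
        Measure.restrict_eq_zero.2 hz
      rw [hres, integral_zero_measure]
    rw [← h0]
    refine tendsto_setIntegral_of_antitone (fun n => measurableSet_ball) ?_ ⟨0, ?_⟩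
    · intro m n hmn
      refine ball_subset_ball ?_
      have : (m : ℝ) + 1 ≤ (n : ℝ) + 1 := by exact_mod_cast Nat.add_le_add_right hmn 1
      exact div_le_div_of_nonneg_left one_pos.le (by positivity) this
    · exact hint.mono_set (ball_subset_ball (by norm_num))
  rw [Metric.tendsto_nhdsWithin_nhds]
  intro ε hε
  obtain ⟨N, hN⟩ := (Metric.tendsto_atTop.1 hseq) ε hε
  have hNd : φ (1 / (N + 1)) < ε := by
    have := hN N le_rfl
    rwa [Real.dist_eq, sub_zero, abs_of_nonneg (hnn _)] at this
  refine ⟨1 / (N + 1), by positivity, fun {r} hr hdist => ?_⟩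
  rw [Real.dist_eq, sub_zero, abs_of_nonneg (hnn r)]
  have hrlt : r < 1 / (N + 1) := by
    rw [Real.dist_eq, sub_zero, abs_of_pos hr] at hdist; exact hdist
  calc φ r ≤ φ (1 / (N + 1)) := hmono _ _ hrlt.le (by
        rw [div_le_one (by positivity)]; exact by norm_num [Nat.cast_nonneg])
    _ < ε := hNd

end Aux

open Set

theorem j_and_Jhat_limits_of_neg
    (d : ℕ) (hd : 1 ≤ d) (σ : ℝ) (hσ1 : -(d : ℝ) < σ) (hσ2 : σ < 0)
    (E : Set (Rd d)) (hE : MeasurableSet E) (hEfin : volume E < ⊤) :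
    (∀ x : Rd d, Tendsto (fun r => jfun d σ r x E) (𝓝[>] (0 : ℝ))
      (𝓝 (-(∫ y in E, kerH d σ x y) - gamFull d σ))) ∧
    Tendsto (fun r => Jhat d σ r E) (𝓝[>] (0 : ℝ))
      (𝓝 (JfunFull d σ E - gamFull d σ * (volume E).toReal)) := by
  have hd1 : (1:ℝ) ≤ d := by exact_mod_cast hd
  set p : ℝ := -((d:ℝ) + σ) with hpdef
  have hp1 : -(d:ℝ) < p := by rw [hpdef]; linarith
  have hp2 : p < 0 := by rw [hpdef]; linarith
  set φ : ℝ → ℝ := fun r => ∫ z in ball (0 : Rd d) r, ‖z‖ ^ p with hφdef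
  have hφ0 : Tendsto φ (𝓝[>] (0:ℝ)) (𝓝 0) :=
    phi_tendsto d hd p (integrableOn_rpow_ball d p hp1 hp2 1)
  have hker_nn : ∀ x y : Rd d, 0 ≤ kerH d σ x y :=
    fun x y => Real.rpow_nonneg (norm_nonneg _) _
  have hballint : ∀ (x : Rd d) (R : ℝ), IntegrableOn (kerH d σ x) (ball x R) :=
    fun x R => ker_int_ball d hd σ hσ1 hσ2 x R
  have hballeq : ∀ (x : Rd d) (r : ℝ), ∫ y in ball x r, kerH d σ x y = φ r :=
    fun x r => ker_ball_eq d σ x r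
  have hmker : ∀ x : Rd d, Measurable (kerH d σ x) := by
    intro x; unfold kerH; fun_prop
  haveI : IsFiniteMeasure (volume.restrict E) :=
    ⟨by rwa [Measure.restrict_apply_univ]⟩
  -- integrability of the kernel on E
  have hEint : ∀ x : Rd d, IntegrableOn (kerH d σ x) E := by
    intro x
    have h1 : IntegrableOn (kerH d σ x) (E ∩ ball x 1) :=
      (hballint x 1).mono_set inter_subset_right
    have h2 : IntegrableOn (kerH d σ x) (E \ ball x 1) := by
      refine Integrable.mono' (g := fun _ => (1:ℝ))
        (integrableOn_const (lt_of_le_of_lt (measure_mono diff_subset) hEfin).ne)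
        ((hmker x).aestronglyMeasurable) ?_
      refine (ae_restrict_mem (hE.diff measurableSet_ball)).mono fun y hy => ?_
      rw [Real.norm_of_nonneg (hker_nn x y)]
      refine Real.rpow_le_one_of_one_le_of_nonpos ?_ (by linarith)
      have : ¬ dist y x < 1 := fun h => hy.2 (mem_ball.2 h)
      rw [dist_comm] at this
      simpa [dist_eq_norm] using not_lt.1 this
    exact (h1.union h2).mono_set (fun y hy => by
      by_cases h : y ∈ ball x 1
      exacts [Or.inl ⟨hy, h⟩, Or.inr ⟨hy, h⟩])
  -- the key uniform estimate
  have key : ∀ (x : Rd d) (r : ℝ),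
      ‖(∫ y in E \ ball x r, kerH d σ x y) - ∫ y in E, kerH d σ x y‖ ≤ φ r := by
    intro x r
    have hdiff : ∫ y in E \ ball x r, kerH d σ x y
        = (∫ y in E, kerH d σ x y) - ∫ y in E ∩ ball x r, kerH d σ x y := by
      rw [← Set.diff_self_inter]
      exact integral_diff (hE.inter measurableSet_ball) (hEint x) inter_subset_left
    rw [hdiff, sub_sub_cancel_left, norm_neg,
      Real.norm_of_nonneg (setIntegral_nonneg (hE.inter measurableSet_ball)
        (fun y _ => hker_nn x y))]
    calc (∫ y in E ∩ ball x r, kerH d σ x y) ≤ ∫ y in ball x r, kerH d σ x y :=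
          setIntegral_mono_set (hballint x r) (Eventually.of_forall (fun y => hker_nn x y))
            (HasSubset.Subset.eventuallyLE inter_subset_right)
      _ = φ r := hballeq x r
  -- the limit of γ
  have hσne : σ ≠ 0 := ne_of_lt hσ2
  have hgam : Tendsto (fun r => gam d σ r) (𝓝[>] (0:ℝ)) (𝓝 (gamFull d σ)) := by
    have h1 : Tendsto (fun r : ℝ => r ^ (-σ)) (𝓝[>] (0:ℝ)) (𝓝 0) := by
      have hc := (Real.continuousAt_rpow_const 0 (-σ) (Or.inr (by linarith))).tendsto
      rw [Real.zero_rpow (by linarith : -σ ≠ 0)] at hc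
      exact hc.mono_left nhdsWithin_le_nhds
    have h2 : Tendsto (fun r : ℝ => (d : ℝ) * omegaD d * (1 - r ^ (-σ)) / σ) (𝓝[>] (0:ℝ))
        (𝓝 ((d : ℝ) * omegaD d * (1 - 0) / σ)) :=
      ((tendsto_const_nhds.sub h1).const_mul _).div_const σ
    simp only [sub_zero, mul_one] at h2
    have hfun : (fun r : ℝ => gam d σ r)
        = fun r : ℝ => (d : ℝ) * omegaD d * (1 - r ^ (-σ)) / σ := by
      funext r; simp [gam, hσne]
    rw [hfun, gamFull]
    exact h2
  -- Part 1
  have part1 : ∀ x : Rd d, Tendsto (fun r => jfun d σ r x E) (𝓝[>] (0 : ℝ))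
      (𝓝 (-(∫ y in E, kerH d σ x y) - gamFull d σ)) := by
    intro x
    have h0 : Tendsto (fun r => (∫ y in E \ ball x r, kerH d σ x y)
        - ∫ y in E, kerH d σ x y) (𝓝[>] (0:ℝ)) (𝓝 0) :=
      squeeze_zero_norm (fun r => key x r) hφ0
    have h1 : Tendsto (fun r => ∫ y in E \ ball x r, kerH d σ x y) (𝓝[>] (0:ℝ))
        (𝓝 (∫ y in E, kerH d σ x y)) := by
      have := h0.add_const (∫ y in E, kerH d σ x y)
      simpa using this
    have h2 := h1.neg.sub hgam
    simpa only [jfun] using h2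
  refine ⟨part1, ?_⟩
  -- Part 2
  set F : Rd d → ℝ := fun x => ∫ y in E, kerH d σ x y with hFdef
  set Fr : ℝ → Rd d → ℝ := fun r x => ∫ y in E \ ball x r, kerH d σ x y with hFrdef
  have hFr_nonneg : ∀ (r : ℝ) (x : Rd d), 0 ≤ Fr r x := fun r x =>
    setIntegral_nonneg (hE.diff measurableSet_ball) (fun y _ => hker_nn x y)
  have hFrm : ∀ r : ℝ, AEStronglyMeasurable (Fr r) (volume.restrict E) := by
    intro r
    have hset : MeasurableSet {q : Rd d × Rd d | r ≤ dist q.2 q.1} :=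
      (isClosed_le continuous_const (continuous_snd.dist continuous_fst)).measurableSet
    have hkm : Measurable (fun q : Rd d × Rd d => kerH d σ q.1 q.2) := by
      unfold kerH; fun_prop
    have hsm : StronglyMeasurable fun q : Rd d × Rd d =>
        Set.indicator {q : Rd d × Rd d | r ≤ dist q.2 q.1}
          (fun q => kerH d σ q.1 q.2) q :=
      (hkm.indicator hset).stronglyMeasurable
    have hint := hsm.integral_prod_right' (ν := volume.restrict E)
    have heq : (fun x : Rd d => ∫ y, Set.indicator {q : Rd d × Rd d | r ≤ dist q.2 q.1}
        (fun q => kerH d σ q.1 q.2) (x, y) ∂(volume.restrict E)) = Fr r := by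
      funext x
      have hind : (fun y : Rd d => Set.indicator {q : Rd d × Rd d | r ≤ dist q.2 q.1}
          (fun q => kerH d σ q.1 q.2) (x, y))
          = Set.indicator {y : Rd d | r ≤ dist y x} (kerH d σ x) := by
        funext y
        by_cases h : r ≤ dist y x <;> simp [Set.indicator, h]
      rw [hind, setIntegral_indicator (by
        exact (isClosed_le continuous_const (continuous_id.dist continuous_const)).measurableSet)]
      have hEs : E ∩ {y : Rd d | r ≤ dist y x} = E \ ball x r := by
        ext y; simp [mem_ball, not_lt, Set.diff_eq, Set.mem_setOf_eq]
      rw [hEs]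
    rw [← heq]
    exact hint.aestronglyMeasurable
  have hFbound : ∀ x : Rd d, F x ≤ φ 1 + (volume E).toReal := by
    intro x
    show (∫ y in E, kerH d σ x y) ≤ φ 1 + (volume E).toReal
    have hsplit : (∫ y in E ∩ ball x 1, kerH d σ x y) + ∫ y in E \ ball x 1, kerH d σ x y
        = ∫ y in E, kerH d σ x y :=
      integral_inter_add_diff measurableSet_ball (hEint x)
    rw [← hsplit]
    refine add_le_add ?_ ?_
    · calc (∫ y in E ∩ ball x 1, kerH d σ x y) ≤ ∫ y in ball x 1, kerH d σ x y :=
            setIntegral_mono_set (hballint x 1) (Eventually.of_forall (fun y => hker_nn x y))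
              (HasSubset.Subset.eventuallyLE inter_subset_right)
        _ = φ 1 := hballeq x 1
    · calc (∫ y in E \ ball x 1, kerH d σ x y) ≤ ∫ _ in E \ ball x 1, (1:ℝ) := by
            refine setIntegral_mono_on ((hEint x).mono_set diff_subset)
              (integrableOn_const (lt_of_le_of_lt (measure_mono diff_subset) hEfin).ne)
              (hE.diff measurableSet_ball) (fun y hy => ?_)
            refine Real.rpow_le_one_of_one_le_of_nonpos ?_ (by linarith)
            have : ¬ dist y x < 1 := fun h => hy.2 (mem_ball.2 h)
            rw [dist_comm] at this
            simpa [dist_eq_norm] using not_lt.1 this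
        _ = (volume (E \ ball x 1)).toReal := by simp; rfl
        _ ≤ (volume E).toReal :=
            ENNReal.toReal_mono hEfin.ne (measure_mono diff_subset)
  have hFrleF : ∀ (r : ℝ) (x : Rd d), Fr r x ≤ F x := fun r x =>
    setIntegral_mono_set (hEint x) (Eventually.of_forall (fun y => hker_nn x y))
      (HasSubset.Subset.eventuallyLE diff_subset)
  have hFrint : ∀ r : ℝ, IntegrableOn (Fr r) E := by
    intro r
    refine Integrable.mono' (integrable_const (φ 1 + (volume E).toReal)) (hFrm r) ?_
    refine Eventually.of_forall fun x => ?_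
    rw [Real.norm_of_nonneg (hFr_nonneg r x)]
    exact (hFrleF r x).trans (hFbound x)
  have hFeq : F = Fr 0 := by
    funext x
    simp only [hFrdef, hFdef, Metric.ball_zero, Set.diff_empty]
  have hFint : IntegrableOn F E := hFeq ▸ hFrint 0
  have hIdiff : ∀ r : ℝ, ‖(∫ x in E, Fr r x) - ∫ x in E, F x‖ ≤ φ r * (volume E).toReal := by
    intro r
    rw [← integral_sub (hFrint r) hFint]
    exact norm_setIntegral_le_of_norm_le_const hEfin (fun x _ => key x r)
  have h2 : Tendsto (fun r => ∫ x in E, Fr r x) (𝓝[>] (0:ℝ)) (𝓝 (∫ x in E, F x)) := by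
    have h0 : Tendsto (fun r => (∫ x in E, Fr r x) - ∫ x in E, F x) (𝓝[>] (0:ℝ)) (𝓝 0) := by
      refine squeeze_zero_norm hIdiff ?_
      have := hφ0.mul_const (volume E).toReal
      simpa using this
    have := h0.add_const (∫ x in E, F x)
    simpa using this
  have hfinal := h2.neg.sub (hgam.mul_const (volume E).toReal)
  have hJ : (fun r => Jhat d σ r E)
      = fun r => -(∫ x in E, Fr r x) - gam d σ r * (volume E).toReal := by
    funext r
    simp only [Jhat, Jfun, hFrdef]
  have hJF : JfunFull d σ E - gamFull d σ * (volume E).toReal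
      = -(∫ x in E, F x) - gamFull d σ * (volume E).toReal := by
    simp only [JfunFull, hFdef]
  rw [hJ, hJF]
  exact hfinal
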